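/- arXiv:1907.00347 — 2 statements merged into one kernel-verified Lean document; each statement's English description precedes it below -/
import Mathlib

section
/- If f and g are hyperbolic Möbius transformations of the upper half-plane whose axes cross in ℍ at an angle θ, then C(f,g) = −tan²(θ/2). -/
set_option synthInstance.maxHeartbeats 1000000
noncomputable section

open Filter Topology Set UpperHalfPlane
open scoped OnePoint MatrixGroups

/-- The group of (orientation-preserving) Möbius transformations of the upper half-plane,
represented by real 2×2 matrices with positive determinant. -/
abbrev Mob : Type := GL(2, ℝ)⁺

namespace Paper

/-- Matrix entries of a Möbius transformation. -/
def ma (g : Mob) : ℝ := (((g : GL (Fin 2) ℝ) : Matrix (Fin 2) (Fin 2) ℝ)) 0 0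
def mb (g : Mob) : ℝ := (((g : GL (Fin 2) ℝ) : Matrix (Fin 2) (Fin 2) ℝ)) 0 1
def mc (g : Mob) : ℝ := (((g : GL (Fin 2) ℝ) : Matrix (Fin 2) (Fin 2) ℝ)) 1 0
def md (g : Mob) : ℝ := (((g : GL (Fin 2) ℝ) : Matrix (Fin 2) (Fin 2) ℝ)) 1 1

/-- The action of a Möbius transformation on the extended real line `ℝ̄ = ℝ ∪ {∞}`,
realized as the one-point compactification `OnePoint ℝ` (a topological circle). -/
def bnd (g : Mob) : OnePoint ℝ → OnePoint ℝ
  | ∞ => if mc g = 0 then ∞ else ((ma g / mc g : ℝ) : OnePoint ℝ)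
  | (x : ℝ) => if mc g * x + md g = 0 then ∞
      else (((ma g * x + mb g) / (mc g * x + md g) : ℝ) : OnePoint ℝ)

/-- The fixed points of a Möbius transformation on the extended real line. -/
def FixedPoints (g : Mob) : Set (OnePoint ℝ) := {x | bnd g x = x}

/-- A Möbius transformation is hyperbolic iff it has exactly two fixed points
on the extended real line. -/
def IsHyperbolic (g : Mob) : Prop :=
  ∃ p q : OnePoint ℝ, p ≠ q ∧ FixedPoints g = {p, q}

/-- `p` is the attracting fixed point of `g`: it is fixed, and the iterates of every
non-fixed boundary point converge to it. -/
def IsAttractingFixedPoint (g : Mob) (p : OnePoint ℝ) : Prop :=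
  bnd g p = p ∧ ∀ x : OnePoint ℝ, x ∉ FixedPoints g →
    Tendsto (fun n => (bnd g)^[n] x) atTop (𝓝 p)

/-- The attracting fixed point α(g) of a hyperbolic transformation. -/
def att (g : Mob) : OnePoint ℝ := Classical.epsilon (IsAttractingFixedPoint g)

/-- The repelling fixed point β(g) of a hyperbolic transformation. -/
def rep (g : Mob) : OnePoint ℝ := Classical.epsilon (IsAttractingFixedPoint g⁻¹)

/-- The hyperbolic geodesic of ℍ with the given endpoints on the extended real line:
a vertical line if one endpoint is `∞`, and a semicircle orthogonal to ℝ otherwise. -/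
def geodesic (u v : OnePoint ℝ) : Set UpperHalfPlane :=
  match u, v with
  | ∞, ∞ => ∅
  | ∞, (x : ℝ) => {z | (z : ℂ).re = x}
  | (x : ℝ), ∞ => {z | (z : ℂ).re = x}
  | (x : ℝ), (y : ℝ) =>
      if x = y then ∅ else {z | ‖(z : ℂ) - (((x + y) / 2 : ℝ) : ℂ)‖ = |x - y| / 2}

/-- The axis of a hyperbolic transformation: the geodesic joining α(g) and β(g). -/
def axisOf (g : Mob) : Set UpperHalfPlane := geodesic (att g) (rep g)

/-- The translation length τ(g): the distance `ρ(w, g w)` for points `w` on the axis of `g`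
(with respect to the hyperbolic metric of ℍ). -/
def transLength (g : Mob) : ℝ := sInf {r : ℝ | ∃ w ∈ axisOf g, r = dist w (g • w)}

/-- Homogeneous-coordinate "difference" of two points of the extended real line:
`dd x y = x - y` for finite points, extended projectively to `∞`. -/
def dd : OnePoint ℝ → OnePoint ℝ → ℝ
  | ∞, ∞ => 0
  | ∞, (_ : ℝ) => 1
  | (_ : ℝ), ∞ => -1
  | (x : ℝ), (y : ℝ) => x - y

/-- The cross ratio `C(f,g) = ((α f − α g)(β f − β g)) / ((α f − β g)(β f − α g))`
of two hyperbolic transformations, computed projectively so that `∞` is allowed as a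
fixed point.  (Real-valued; the statements below only use it when it is finite.) -/
def crossRatio (f g : Mob) : ℝ :=
  (dd (att f) (att g) * dd (rep f) (rep g)) / (dd (att f) (rep g) * dd (rep f) (att g))

/-- The space of self-maps of ℍ with the topology (uniform structure) of uniform
convergence on compact subsets. -/
abbrev CompactConv := UniformOnFun UpperHalfPlane UpperHalfPlane {K : Set UpperHalfPlane | IsCompact K}

/-- The transformation of ℍ induced by `g`, as an element of the space of maps with the
topology of uniform convergence on compact sets. -/
def toMap (g : Mob) : CompactConv :=
  UniformOnFun.ofFun {K : Set UpperHalfPlane | IsCompact K} (fun z => g • z)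

/-- The set of transformations of ℍ induced by a set of Möbius transformations. -/
def transforms (S : Set Mob) : Set CompactConv := toMap '' S

/-- The identity transformation. -/
def idMap : CompactConv := UniformOnFun.ofFun {K : Set UpperHalfPlane | IsCompact K} id

/-- A set of Möbius transformations is semidiscrete if the identity transformation is not
an accumulation point of the induced set of transformations of ℍ, in the topology of
uniform convergence on compact sets. -/
def IsSemidiscrete (S : Set Mob) : Prop := ¬ AccPt idMap (𝓟 (transforms S))

/-- `g` acts as the identity transformation of ℍ. -/
def ActsAsId (g : Mob) : Prop := ∀ z : UpperHalfPlane, g • z = z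

/-- A set of Möbius transformations is inverse-free if (as a set of transformations) it
contains no inverse of any of its elements, i.e. no composition of two of its elements is
the identity transformation. -/
def InverseFree (S : Set Mob) : Prop := ∀ f ∈ S, ∀ g ∈ S, ¬ ActsAsId (f * g)

/-- The semigroup generated by a set of Möbius transformations: all finite compositions. -/
def semigroupOf (F : Set Mob) : Set Mob := (Subsemigroup.closure F : Subsemigroup Mob)

/-- The induced set of transformations of ℍ is discrete. -/
def IsDiscreteSet (S : Set Mob) : Prop := DiscreteTopology ↥(transforms S)

/-- `S` is a discrete group (of transformations): closed under composition and inverses as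
a set of transformations, and discrete. -/
def IsDiscreteGroupOfTransforms (S : Set Mob) : Prop :=
  (∀ f ∈ S, ∀ g ∈ S, ∃ h ∈ S, ∀ z : UpperHalfPlane, (f * g) • z = h • z) ∧
  (∀ f ∈ S, ∃ g ∈ S, ActsAsId (f * g)) ∧ IsDiscreteSet S

/-- An open interval of the extended real line (circle): a nonempty, open, connected,
proper subset. -/
def IsOpenArc (I : Set (OnePoint ℝ)) : Prop := IsOpen I ∧ IsConnected I ∧ I ≠ univ

/-- There are `m` open intervals of ℝ̄ with pairwise disjoint closures whose union `C`
is mapped strictly inside itself (`f(C̄) ⊆ C`) by every element of `F`. -/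
def SchottkyConfig (F : Set Mob) (m : ℕ) : Prop :=
  ∃ I : Fin m → Set (OnePoint ℝ), (∀ i, IsOpenArc (I i)) ∧
    (Pairwise fun i j => Disjoint (closure (I i)) (closure (I j))) ∧
    ∀ f ∈ F, bnd f '' closure (⋃ i, I i) ⊆ ⋃ i, I i

/-- The semigroup generated by `F` is a Schottky semigroup of rank `m`: `m` is the least
positive number of intervals in a configuration as above. -/
def IsSchottkyOfRank (F : Set Mob) (m : ℕ) : Prop :=
  0 < m ∧ SchottkyConfig F m ∧ ∀ k : ℕ, 0 < k → SchottkyConfig F k → m ≤ k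

/-- The unit tangent direction at `p ∈ ℍ` of the hyperbolic geodesic ray from `p` to the
boundary point `u`. -/
def dirTo (p : UpperHalfPlane) (u : OnePoint ℝ) : ℂ :=
  match u with
  | ∞ => Complex.I
  | (x : ℝ) =>
      if x = (p : ℂ).re then -Complex.I
      else
        (fun t : ℂ => (if (p : ℂ).re < x then -t else t) / ((‖t‖ : ℝ) : ℂ))
          (Complex.I * ((p : ℂ) -
            (((x ^ 2 - (p : ℂ).re ^ 2 - (p : ℂ).im ^ 2) / (2 * (x - (p : ℂ).re)) : ℝ) : ℂ)))

/-- The (hyperbolic = Euclidean, by conformality) angle at `p` between the geodesic rays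
from `p` to the boundary points `u` and `v`; this is the angle at `p` of the hyperbolic
triangle with vertices `u`, `v`, `p`. -/
def angleAt (p : UpperHalfPlane) (u v : OnePoint ℝ) : ℝ :=
  Real.arccos ((dirTo p u * (starRingEnd ℂ) (dirTo p v)).re)

/-- The geodesic with endpoints `u, v` crosses the axis of `g` orthogonally. -/
def PerpToAxis (u v : OnePoint ℝ) (g : Mob) : Prop :=
  ∃ p : UpperHalfPlane, p ∈ geodesic u v ∧ p ∈ axisOf g ∧
    angleAt p u (att g) = Real.pi / 2

/-- An interval `I ⊆ ℝ̄` is symmetric with respect to `g` if the hyperbolic geodesic with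
the same endpoints as `I` is perpendicular to the axis of `g`. -/
def SymmetricWrt (g : Mob) (I : Set (OnePoint ℝ)) : Prop :=
  ∃ u v : OnePoint ℝ, u ≠ v ∧ frontier I = {u, v} ∧ PerpToAxis u v g

/-- Embedding of the boundary circle ℝ̄ into the Riemann sphere `ℂ̄ = OnePoint ℂ`. -/
def embR : OnePoint ℝ → OnePoint ℂ
  | ∞ => ∞
  | (r : ℝ) => ((r : ℂ) : OnePoint ℂ)

/-- The orbit of the base point `i` under a set of Möbius transformations, viewed inside
the Riemann sphere. -/
def orbitPts (S : Set Mob) : Set (OnePoint ℂ) :=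
  {w | ∃ g ∈ S, w = ((((g • UpperHalfPlane.I : UpperHalfPlane) : ℂ) : OnePoint ℂ))}

/-- The forward limit set Λ⁺(S): boundary accumulation points of the orbit of `i`. -/
def forwardLimitSet (S : Set Mob) : Set (OnePoint ℝ) :=
  {x | AccPt (embR x) (𝓟 (orbitPts S))}

/-- The backward limit set Λ⁻(S) = Λ⁺(S⁻¹). -/
def backwardLimitSet (S : Set Mob) : Set (OnePoint ℝ) :=
  forwardLimitSet ((·⁻¹) '' S)

/-- `a, b, c` lie in (strictly increasing) cyclic order on the circle ℝ̄, for one fixed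
orientation. -/
def cyc (a b c : OnePoint ℝ) : Prop := 0 < dd a b * dd b c * dd c a

/-- Four points lie in the cyclic order `a, b, c, d` on the circle ℝ̄ (in one of the two
orientations). -/
def InCyclicOrder (a b c d : OnePoint ℝ) : Prop :=
  (cyc a b c ∧ cyc a c d) ∨ (cyc a d c ∧ cyc a c b)

/-- The closed arc from `u` to `v` not containing `w`. -/
def closedArcAvoiding (u v w : OnePoint ℝ) : Set (OnePoint ℝ) :=
  {x | ((cyc w u x ∨ u = x) ∧ (cyc w x v ∨ x = v)) ∨
       ((cyc w v x ∨ v = x) ∧ (cyc w x u ∨ x = u))}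

/-- The open arc from `u` to `v` not containing `w`. -/
def openArcAvoiding (u v w : OnePoint ℝ) : Set (OnePoint ℝ) :=
  {x | (cyc w u x ∧ cyc w x v) ∨ (cyc w v x ∧ cyc w x u)}

lemma tanA (C : ℝ) (h1 : -1 ≤ C) (h2 : C ≤ 1) :
    -(Real.tan (Real.arccos C / 2))^2 = (C-1)/(C+1) := by
  rcases eq_or_lt_of_le h1 with h | h
  · rw [← h]
    norm_num [Real.arccos_neg_one, Real.tan_pi_div_two]
  · have hc : Real.cos (Real.arccos C) = C := Real.cos_arccos h1 h2
    have hθ1 : Real.arccos C < Real.pi := by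
      rcases lt_or_eq_of_le (Real.arccos_le_pi C) with h' | h'
      · exact h'
      · exfalso
        have := Real.cos_arccos h1 h2
        rw [h', Real.cos_pi] at this
        linarith
    have hθ0 : 0 ≤ Real.arccos C := Real.arccos_nonneg C
    have hcos2 : 0 < Real.cos (Real.arccos C / 2) :=
      Real.cos_pos_of_mem_Ioo ⟨by linarith [Real.pi_pos], by linarith⟩
    have hC1 : 0 < C + 1 := by linarith
    have hcos : Real.cos (Real.arccos C / 2) ^ 2 = (1 + C) / 2 := by
      have := Real.cos_sq (Real.arccos C / 2)
      rw [mul_div_cancel₀ _ (two_ne_zero), hc] at this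
      linarith
    have hsin : Real.sin (Real.arccos C / 2) ^ 2 = (1 - C) / 2 := by
      have := Real.sin_sq_add_cos_sq (Real.arccos C / 2)
      linarith
    rw [Real.tan_eq_sin_div_cos, div_pow, hsin, hcos]
    rw [div_div_div_comm, div_self (two_ne_zero), div_one, ← neg_div, neg_sub]
    rw [add_comm 1 C]

lemma dirTo_eq (p : UpperHalfPlane) (x : ℝ) :
    dirTo p (x : OnePoint ℝ) =
      (((2*(x - (p:ℂ).re)*(p:ℂ).im : ℝ) : ℂ) + (((x - (p:ℂ).re)^2 - (p:ℂ).im^2 : ℝ) : ℂ) * Complex.I) /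
        (((x - (p:ℂ).re)^2 + (p:ℂ).im^2 : ℝ) : ℂ) := by
  have hcoe : dirTo p (x : OnePoint ℝ) = if x = (p : ℂ).re then -Complex.I else
        (fun t : ℂ => (if (p : ℂ).re < x then -t else t) / ((‖t‖ : ℝ) : ℂ))
          (Complex.I * ((p : ℂ) -
            (((x ^ 2 - (p : ℂ).re ^ 2 - (p : ℂ).im ^ 2) / (2 * (x - (p : ℂ).re)) : ℝ) : ℂ))) := rfl
  set s := (p:ℂ).re with hs
  set t := (p:ℂ).im with htt
  have ht : 0 < t := p.im_pos
  by_cases hx : x = s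
  · rw [hcoe, if_pos hx, hx]
    rw [eq_div_iff (by
      push_cast
      simp only [sub_self]
      norm_num
      exact ne_of_gt ht)]
    push_cast
    ring
  · have hw : x - s ≠ 0 := sub_ne_zero.mpr hx
    have hwC : ((x : ℂ) - (s : ℂ)) ≠ 0 := by
      intro h
      exact hw (by exact_mod_cast h)
    have hpc : (p : ℂ) = (s : ℂ) + (t : ℂ) * Complex.I := (Complex.re_add_im _).symm
    have hm' : s - (x ^ 2 - s ^ 2 - t ^ 2) / (2 * (x - s)) = (t^2 - (x-s)^2)/(2*(x-s)) := by
      field_simp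
      ring
    have hT : Complex.I * ((p : ℂ) -
            (((x ^ 2 - s ^ 2 - t ^ 2) / (2 * (x - s)) : ℝ) : ℂ))
        = ((-t : ℝ) : ℂ) + (((t^2 - (x-s)^2)/(2*(x-s)) : ℝ) : ℂ) * Complex.I := by
      rw [hpc, ← hm']
      apply Complex.ext
      · simp only [Complex.mul_re, Complex.mul_im, Complex.add_re, Complex.add_im,
          Complex.sub_re, Complex.sub_im, Complex.I_re, Complex.I_im,
          Complex.ofReal_re, Complex.ofReal_im]
        ring
      · simp only [Complex.mul_re, Complex.mul_im, Complex.add_re, Complex.add_im,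
          Complex.sub_re, Complex.sub_im, Complex.I_re, Complex.I_im,
          Complex.ofReal_re, Complex.ofReal_im]
        ring
    have habs : ‖((-t : ℝ) : ℂ) + (((t^2 - (x-s)^2)/(2*(x-s)) : ℝ) : ℂ) * Complex.I‖
        = ((x-s)^2 + t^2) / (2 * |x - s|) := by
      rw [Complex.norm_add_mul_I]
      rw [show (-t)^2 + ((t^2 - (x-s)^2)/(2*(x-s)))^2 = (((x-s)^2 + t^2) / (2 * |x - s|))^2 from by
        rw [div_pow, div_pow, mul_pow, mul_pow, sq_abs]
        field_simp
        ring]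
      exact Real.sqrt_sq (by positivity)
    rw [hcoe, if_neg hx]
    simp only []
    rw [hT, habs]
    have hd1 : ((((x-s)^2 + t^2) / (2 * |x - s|) : ℝ) : ℂ) ≠ 0 := by
      rw [Complex.ofReal_ne_zero]
      positivity
    have hd2 : ((((x-s)^2 + t^2) : ℝ) : ℂ) ≠ 0 := by
      rw [Complex.ofReal_ne_zero]
      positivity
    rcases lt_or_gt_of_ne (fun h => hx h.symm) with hlt | hlt
    · rw [if_pos hlt]
      rw [abs_of_pos (sub_pos.mpr hlt)]
      apply Complex.ext <;>
        simp only [Complex.div_ofReal_re, Complex.div_ofReal_im, Complex.neg_re,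
          Complex.neg_im, Complex.add_re, Complex.add_im, Complex.mul_re, Complex.mul_im,
          Complex.I_re, Complex.I_im, Complex.ofReal_re, Complex.ofReal_im] <;>
        field_simp [hw] <;> ring
    · rw [if_neg (not_lt.mpr (le_of_lt hlt))]
      rw [abs_of_neg (sub_neg.mpr hlt)]
      apply Complex.ext <;>
        simp only [Complex.div_ofReal_re, Complex.div_ofReal_im, Complex.neg_re,
          Complex.neg_im, Complex.add_re, Complex.add_im, Complex.mul_re, Complex.mul_im,
          Complex.I_re, Complex.I_im, Complex.ofReal_re, Complex.ofReal_im] <;>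
        field_simp [hw] <;> ring

lemma geodesic_fin (p : UpperHalfPlane) (x y : ℝ) (h : p ∈ geodesic (x : OnePoint ℝ) (y : OnePoint ℝ)) :
    (x - (p:ℂ).re) * (y - (p:ℂ).re) = -(p:ℂ).im^2 := by
  have hcoe : geodesic (x : OnePoint ℝ) (y : OnePoint ℝ) =
      if x = y then ∅ else {z : UpperHalfPlane | ‖(z : ℂ) - (((x + y) / 2 : ℝ) : ℂ)‖ = |x - y| / 2} := rfl
  rw [hcoe] at h
  by_cases hxy : x = y
  · rw [if_pos hxy] at h
    exact absurd h (Set.notMem_empty p)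
  · rw [if_neg hxy] at h
    have h2 : ‖(p : ℂ) - (((x + y) / 2 : ℝ) : ℂ)‖ ^ 2 = (|x - y| / 2)^2 := by
      rw [h]
    rw [Complex.sq_norm, Complex.normSq_apply] at h2
    simp only [Complex.sub_re, Complex.sub_im, Complex.ofReal_re, Complex.ofReal_im,
      div_pow, sq_abs, sub_zero] at h2
    nlinarith [h2]

lemma geodesic_inf (p : UpperHalfPlane) (x : ℝ) (h : p ∈ geodesic (∞ : OnePoint ℝ) (x : OnePoint ℝ)) :
    (p:ℂ).re = x := h

lemma geodesic_inf' (p : UpperHalfPlane) (x : ℝ) (h : p ∈ geodesic (x : OnePoint ℝ) (∞ : OnePoint ℝ)) :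
    (p:ℂ).re = x := h

lemma geodesic_inf_inf (p : UpperHalfPlane) (h : p ∈ geodesic (∞ : OnePoint ℝ) (∞ : OnePoint ℝ)) :
    False := h

lemma dirTo_inf (p : UpperHalfPlane) : dirTo p (∞ : OnePoint ℝ) = Complex.I := rfl

lemma r1 (p : UpperHalfPlane) (x y : ℝ) :
    (dirTo p (x : OnePoint ℝ) * (starRingEnd ℂ) (dirTo p (y : OnePoint ℝ))).re =
      (4*(x - (p:ℂ).re)*(y - (p:ℂ).re)*(p:ℂ).im^2 +
        ((x - (p:ℂ).re)^2 - (p:ℂ).im^2) * ((y - (p:ℂ).re)^2 - (p:ℂ).im^2)) /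
      (((x - (p:ℂ).re)^2 + (p:ℂ).im^2) * ((y - (p:ℂ).re)^2 + (p:ℂ).im^2)) := by
  have ht : 0 < (p:ℂ).im := p.im_pos
  set s := (p:ℂ).re
  set t := (p:ℂ).im
  have hdx : ((x - s)^2 + t^2) ≠ 0 := by positivity
  have hdy : ((y - s)^2 + t^2) ≠ 0 := by positivity
  rw [dirTo_eq, dirTo_eq]
  rw [map_div₀, Complex.conj_ofReal, map_add, map_mul, Complex.conj_ofReal,
    Complex.conj_ofReal, Complex.conj_I]
  rw [div_mul_div_comm, ← Complex.ofReal_mul]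
  rw [Complex.div_ofReal_re]
  simp only [Complex.add_re, Complex.add_im, Complex.mul_re, Complex.mul_im,
    Complex.I_re, Complex.I_im, Complex.ofReal_re, Complex.ofReal_im, Complex.neg_re,
    Complex.neg_im, Complex.sub_re, Complex.sub_im]
  rw [div_eq_div_iff (by positivity) (by positivity)]
  ring

lemma r2 (p : UpperHalfPlane) (y : ℝ) :
    (Complex.I * (starRingEnd ℂ) (dirTo p (y : OnePoint ℝ))).re =
      ((y - (p:ℂ).re)^2 - (p:ℂ).im^2) / ((y - (p:ℂ).re)^2 + (p:ℂ).im^2) := by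
  have ht : 0 < (p:ℂ).im := p.im_pos
  set s := (p:ℂ).re
  set t := (p:ℂ).im
  rw [dirTo_eq]
  rw [map_div₀, Complex.conj_ofReal, map_add, map_mul, Complex.conj_ofReal,
    Complex.conj_ofReal, Complex.conj_I]
  rw [← mul_div_assoc, Complex.div_ofReal_re]
  simp only [Complex.add_re, Complex.add_im, Complex.mul_re, Complex.mul_im,
    Complex.I_re, Complex.I_im, Complex.ofReal_re, Complex.ofReal_im, Complex.neg_re,
    Complex.neg_im, Complex.sub_re, Complex.sub_im]
  rw [div_eq_div_iff (by positivity) (by positivity)]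
  ring

lemma r3 (p : UpperHalfPlane) (x : ℝ) :
    (dirTo p (x : OnePoint ℝ) * (starRingEnd ℂ) Complex.I).re =
      ((x - (p:ℂ).re)^2 - (p:ℂ).im^2) / ((x - (p:ℂ).re)^2 + (p:ℂ).im^2) := by
  have ht : 0 < (p:ℂ).im := p.im_pos
  set s := (p:ℂ).re
  set t := (p:ℂ).im
  rw [dirTo_eq, Complex.conj_I]
  rw [div_mul_eq_mul_div, Complex.div_ofReal_re]
  simp only [Complex.add_re, Complex.add_im, Complex.mul_re, Complex.mul_im,
    Complex.I_re, Complex.I_im, Complex.ofReal_re, Complex.ofReal_im, Complex.neg_re,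
    Complex.neg_im, Complex.sub_re, Complex.sub_im]
  rw [div_eq_div_iff (by positivity) (by positivity)]
  ring

lemma r4 : (Complex.I * (starRingEnd ℂ) Complex.I).re = 1 := by
  simp [Complex.conj_I]

lemma key (t w1 w2 w3 w4 C : ℝ) (ht : 0 < t) (h12 : w1*w2 = -t^2) (h34 : w3*w4 = -t^2)
    (hC : C = (4*w1*w3*t^2 + (w1^2-t^2)*(w3^2-t^2))/((w1^2+t^2)*(w3^2+t^2))) :
    (w1-w3)*(w2-w4) / ((w1-w4)*(w2-w3)) = (C-1)/(C+1) := by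
  have hw1 : w1 ≠ 0 := by intro h; rw [h] at h12; nlinarith
  have hw3 : w3 ≠ 0 := by intro h; rw [h] at h34; nlinarith
  have hw2 : w2 = -t^2/w1 := by field_simp; linear_combination h12
  have hw4 : w4 = -t^2/w3 := by field_simp; linear_combination h34
  subst hw2 hw4
  have hE : (0:ℝ) < (w1^2+t^2)*(w3^2+t^2) := by positivity
  by_cases h0 : w1*w3 + t^2 = 0
  · have hL : w1 - -t^2/w3 = 0 := by
      field_simp
      linear_combination h0
    have hC1 : C + 1 = 0 := by
      rw [hC]
      rw [div_add' _ _ _ (ne_of_gt hE), div_eq_zero_iff]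
      left
      linear_combination (2*(w1*w3+t^2))*h0
    rw [hL, zero_mul, div_zero, hC1, div_zero]
  · have hd1 : w1 - -t^2/w3 ≠ 0 := by
      rw [sub_ne_zero]
      intro h
      apply h0
      field_simp at h
      linear_combination h
    have hd2 : -t^2/w1 - w3 ≠ 0 := by
      rw [sub_ne_zero]
      intro h
      apply h0
      field_simp at h
      linear_combination -h
    have hC1 : C + 1 = 2*(w1*w3+t^2)^2/((w1^2+t^2)*(w3^2+t^2)) := by
      rw [hC]
      field_simp
      ring
    have hC2 : C - 1 = -(2*t^2*(w1-w3)^2)/((w1^2+t^2)*(w3^2+t^2)) := by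
      rw [hC]
      field_simp
      ring
    have hC1ne : C + 1 ≠ 0 := by
      rw [hC1]
      positivity
    rw [div_eq_div_iff (mul_ne_zero hd1 hd2) hC1ne, hC1, hC2]
    field_simp
    ring

lemma dd_inf_inf : dd ∞ ∞ = 0 := rfl
lemma dd_inf_coe (x : ℝ) : dd ∞ (x : OnePoint ℝ) = 1 := rfl
lemma dd_coe_inf (x : ℝ) : dd (x : OnePoint ℝ) ∞ = -1 := rfl
lemma dd_coe_coe (x y : ℝ) : dd (x : OnePoint ℝ) (y : OnePoint ℝ) = x - y := rfl

lemma opt_cases (u : OnePoint ℝ) : u = ∞ ∨ ∃ x : ℝ, u = (x : OnePoint ℝ) := by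
  cases u with
  | infty => exact Or.inl rfl
  | coe x => exact Or.inr ⟨x, rfl⟩

lemma bnd2 (t w1 w3 : ℝ) (ht : 0 < t) :
    -1 ≤ (4*w1*w3*t^2 + (w1^2-t^2)*(w3^2-t^2))/((w1^2+t^2)*(w3^2+t^2)) ∧
    (4*w1*w3*t^2 + (w1^2-t^2)*(w3^2-t^2))/((w1^2+t^2)*(w3^2+t^2)) ≤ 1 := by
  have hE : (0:ℝ) < (w1^2+t^2)*(w3^2+t^2) := by positivity
  constructor
  · rw [le_div_iff₀ hE]
    nlinarith [sq_nonneg (w1*w3+t^2)]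
  · rw [div_le_one hE]
    nlinarith [sq_nonneg (t*(w1-w3))]

lemma bnd1 (t w : ℝ) (ht : 0 < t) :
    -1 ≤ (w^2-t^2)/(w^2+t^2) ∧ (w^2-t^2)/(w^2+t^2) ≤ 1 := by
  have hE : (0:ℝ) < w^2+t^2 := by positivity
  constructor
  · rw [le_div_iff₀ hE]
    nlinarith
  · rw [div_le_one hE]
    nlinarith

lemma bnd1' (t w : ℝ) (ht : 0 < t) :
    -1 ≤ (t^2-w^2)/(t^2+w^2) ∧ (t^2-w^2)/(t^2+w^2) ≤ 1 := by
  have hE : (0:ℝ) < t^2+w^2 := by positivity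
  constructor
  · rw [le_div_iff₀ hE]
    nlinarith
  · rw [div_le_one hE]
    nlinarith

lemma keyA (t w3 w4 : ℝ) (ht : 0 < t) (h34 : w3*w4 = -t^2) :
    w4/w3 = (((w3^2-t^2)/(w3^2+t^2)) - 1)/(((w3^2-t^2)/(w3^2+t^2)) + 1) := by
  have hw3 : w3 ≠ 0 := by intro h; rw [h] at h34; nlinarith
  have hE : (0:ℝ) < w3^2+t^2 := by positivity
  have h1 : ((w3^2-t^2)/(w3^2+t^2)) - 1 = -(2*t^2)/(w3^2+t^2) := by
    field_simp
    ring
  have h2 : ((w3^2-t^2)/(w3^2+t^2)) + 1 = 2*w3^2/(w3^2+t^2) := by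
    field_simp
    ring
  rw [h1, h2, div_div_div_comm, div_self (ne_of_gt hE), div_one]
  rw [div_eq_div_iff hw3 (by positivity)]
  linear_combination 2*w3*h34

lemma keyB (t w3 w4 : ℝ) (ht : 0 < t) (h34 : w3*w4 = -t^2) :
    w3/w4 = (((t^2-w3^2)/(t^2+w3^2)) - 1)/(((t^2-w3^2)/(t^2+w3^2)) + 1) := by
  have hw3 : w3 ≠ 0 := by intro h; rw [h] at h34; nlinarith
  have hw4 : w4 ≠ 0 := by intro h; rw [h] at h34; nlinarith
  have hE : (0:ℝ) < t^2+w3^2 := by positivity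
  have h1 : ((t^2-w3^2)/(t^2+w3^2)) - 1 = -(2*w3^2)/(t^2+w3^2) := by
    field_simp
    ring
  have h2 : ((t^2-w3^2)/(t^2+w3^2)) + 1 = 2*t^2/(t^2+w3^2) := by
    field_simp
    ring
  rw [h1, h2, div_div_div_comm, div_self (ne_of_gt hE), div_one]
  rw [div_eq_div_iff hw4 (by positivity)]
  linear_combination 2*w3*h34

lemma main (p : UpperHalfPlane) (a b c d : OnePoint ℝ)
    (hab : p ∈ geodesic a b) (hcd : p ∈ geodesic c d) :
    (dd a c * dd b d) / (dd a d * dd b c)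
      = -(Real.tan (Real.arccos ((dirTo p a * (starRingEnd ℂ) (dirTo p c)).re) / 2))^2 := by
  have ht : 0 < (p:ℂ).im := p.im_pos
  rcases opt_cases a with rfl | ⟨xa, rfl⟩
  · rcases opt_cases b with rfl | ⟨yb, rfl⟩
    · exact absurd hab (geodesic_inf_inf p)
    · have hb : (p:ℂ).re = yb := geodesic_inf p yb hab
      rcases opt_cases c with rfl | ⟨xc, rfl⟩
      · rcases opt_cases d with rfl | ⟨yd, rfl⟩
        · exact absurd hcd (geodesic_inf_inf p)
        · -- case (1,1): a=∞,c=∞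
          rw [dirTo_inf, r4, Real.arccos_one]
          rw [dd_inf_inf]
          norm_num
      · rcases opt_cases d with rfl | ⟨yd, rfl⟩
        · -- case (1,2): a=∞,b fin; c fin, d=∞
          have hc : (p:ℂ).re = xc := geodesic_inf' p xc hcd
          rw [dirTo_inf, r2, ← hc]
          rw [dd_inf_inf, dd_inf_coe, dd_coe_inf]
          rw [show ((p:ℂ).re - (p:ℂ).re)^2 - (p:ℂ).im^2 = -(p:ℂ).im^2 from by ring,
            show ((p:ℂ).re - (p:ℂ).re)^2 + (p:ℂ).im^2 = (p:ℂ).im^2 from by ring,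
            neg_div, div_self (by positivity : ((p:ℂ).im^2 : ℝ) ≠ 0)]
          rw [Real.arccos_neg_one, Real.tan_pi_div_two]
          norm_num
        · -- case (1,3): a=∞,b fin; c,d fin
          have hfin : (xc - (p:ℂ).re) * (yd - (p:ℂ).re) = -(p:ℂ).im^2 :=
            geodesic_fin p xc yd hcd
          rw [dirTo_inf, r2]
          obtain ⟨b1, b2⟩ := bnd1 (p:ℂ).im (xc - (p:ℂ).re) ht
          rw [tanA _ b1 b2]
          rw [dd_inf_coe, dd_inf_coe, dd_coe_coe, dd_coe_coe, one_mul, one_mul, ← hb]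
          rw [show (p:ℂ).re - yd = -(yd - (p:ℂ).re) from by ring,
            show (p:ℂ).re - xc = -(xc - (p:ℂ).re) from by ring, neg_div_neg_eq]
          exact keyA (p:ℂ).im (xc - (p:ℂ).re) (yd - (p:ℂ).re) ht hfin
  · rcases opt_cases b with rfl | ⟨yb, rfl⟩
    · -- b = ∞, a = xa finite
      have ha : (p:ℂ).re = xa := geodesic_inf' p xa hab
      rcases opt_cases c with rfl | ⟨xc, rfl⟩
      · rcases opt_cases d with rfl | ⟨yd, rfl⟩
        · exact absurd hcd (geodesic_inf_inf p)
        · -- case (2,1)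
          rw [dirTo_inf, r3, ← ha]
          rw [show ((p:ℂ).re - (p:ℂ).re)^2 - (p:ℂ).im^2 = -(p:ℂ).im^2 from by ring,
            show ((p:ℂ).re - (p:ℂ).re)^2 + (p:ℂ).im^2 = (p:ℂ).im^2 from by ring,
            neg_div, div_self (by positivity : ((p:ℂ).im^2 : ℝ) ≠ 0)]
          rw [Real.arccos_neg_one, Real.tan_pi_div_two]
          rw [dd_inf_inf]
          norm_num
      · rcases opt_cases d with rfl | ⟨yd, rfl⟩
        · -- case (2,2)
          have hc : (p:ℂ).re = xc := geodesic_inf' p xc hcd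
          have hC : (dirTo p (xa : OnePoint ℝ) *
              (starRingEnd ℂ) (dirTo p (xc : OnePoint ℝ))).re = 1 := by
            rw [r1, ← ha, ← hc, div_eq_one_iff_eq (by positivity)]
            ring
          rw [hC, Real.arccos_one]
          rw [dd_inf_inf]
          norm_num
        · -- case (2,3)
          have hfin : (xc - (p:ℂ).re) * (yd - (p:ℂ).re) = -(p:ℂ).im^2 :=
            geodesic_fin p xc yd hcd
          have hC : (dirTo p (xa : OnePoint ℝ) *
              (starRingEnd ℂ) (dirTo p (xc : OnePoint ℝ))).re =
              ((p:ℂ).im^2 - (xc - (p:ℂ).re)^2) / ((p:ℂ).im^2 + (xc - (p:ℂ).re)^2) := by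
            rw [r1, ← ha]
            rw [div_eq_div_iff (by positivity) (by positivity)]
            ring
          obtain ⟨b1, b2⟩ := bnd1' (p:ℂ).im (xc - (p:ℂ).re) ht
          rw [hC, tanA _ b1 b2]
          rw [dd_coe_coe, dd_inf_coe, dd_coe_coe, dd_inf_coe, mul_one, mul_one, ← ha]
          rw [show (p:ℂ).re - xc = -(xc - (p:ℂ).re) from by ring,
            show (p:ℂ).re - yd = -(yd - (p:ℂ).re) from by ring, neg_div_neg_eq]
          exact keyB (p:ℂ).im (xc - (p:ℂ).re) (yd - (p:ℂ).re) ht hfin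
    · -- a = xa, b = yb finite
      have hfab : (xa - (p:ℂ).re) * (yb - (p:ℂ).re) = -(p:ℂ).im^2 :=
        geodesic_fin p xa yb hab
      rcases opt_cases c with rfl | ⟨xc, rfl⟩
      · rcases opt_cases d with rfl | ⟨yd, rfl⟩
        · exact absurd hcd (geodesic_inf_inf p)
        · -- case (3,1)
          have hd : (p:ℂ).re = yd := geodesic_inf p yd hcd
          rw [dirTo_inf, r3]
          obtain ⟨b1, b2⟩ := bnd1 (p:ℂ).im (xa - (p:ℂ).re) ht
          rw [tanA _ b1 b2]
          rw [dd_coe_inf, dd_coe_coe, dd_coe_coe, dd_coe_inf, neg_one_mul, mul_neg_one,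
            neg_div_neg_eq, ← hd]
          exact keyA (p:ℂ).im (xa - (p:ℂ).re) (yb - (p:ℂ).re) ht hfab
      · rcases opt_cases d with rfl | ⟨yd, rfl⟩
        · -- case (3,2)
          have hc : (p:ℂ).re = xc := geodesic_inf' p xc hcd
          have hC : (dirTo p (xa : OnePoint ℝ) *
              (starRingEnd ℂ) (dirTo p (xc : OnePoint ℝ))).re =
              ((p:ℂ).im^2 - (xa - (p:ℂ).re)^2) / ((p:ℂ).im^2 + (xa - (p:ℂ).re)^2) := by
            rw [r1, ← hc]
            rw [div_eq_div_iff (by positivity) (by positivity)]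
            ring
          obtain ⟨b1, b2⟩ := bnd1' (p:ℂ).im (xa - (p:ℂ).re) ht
          rw [hC, tanA _ b1 b2]
          rw [dd_coe_coe, dd_coe_inf, dd_coe_inf, dd_coe_coe, mul_neg_one, neg_one_mul,
            neg_div_neg_eq, ← hc]
          exact keyB (p:ℂ).im (xa - (p:ℂ).re) (yb - (p:ℂ).re) ht hfab
        · -- case (3,3)
          have hfcd : (xc - (p:ℂ).re) * (yd - (p:ℂ).re) = -(p:ℂ).im^2 :=
            geodesic_fin p xc yd hcd
          rw [r1]
          obtain ⟨b1, b2⟩ := bnd2 (p:ℂ).im (xa - (p:ℂ).re) (xc - (p:ℂ).re) ht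
          rw [tanA _ b1 b2]
          rw [dd_coe_coe, dd_coe_coe, dd_coe_coe, dd_coe_coe]
          rw [show xa - xc = (xa - (p:ℂ).re) - (xc - (p:ℂ).re) from by ring,
            show yb - yd = (yb - (p:ℂ).re) - (yd - (p:ℂ).re) from by ring,
            show xa - yd = (xa - (p:ℂ).re) - (yd - (p:ℂ).re) from by ring,
            show yb - xc = (yb - (p:ℂ).re) - (xc - (p:ℂ).re) from by ring]
          exact key (p:ℂ).im (xa - (p:ℂ).re) (yb - (p:ℂ).re) (xc - (p:ℂ).re)
            (yd - (p:ℂ).re) _ ht hfab hfcd rfl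

end Paper

open Paper in
/-- Lemma 2.1(i): if the axes of the hyperbolic transformations `f` and
`g` cross at a point of ℍ at an angle `θ`, then `C(f,g) = −tan²(θ/2)`. -/
theorem statement3 (f g : Mob) (hf : IsHyperbolic f) (hg : IsHyperbolic g)
    (p : UpperHalfPlane) (hpf : p ∈ axisOf f) (hpg : p ∈ axisOf g)
    (θ : ℝ) (hθ : θ = angleAt p (att f) (att g)) :
    crossRatio f g = -(Real.tan (θ / 2)) ^ 2 := by
  subst hθ
  unfold crossRatio angleAt
  exact main p (att f) (rep f) (att g) (rep g) hpf hpg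
end
end

section
/- Let f₁, f₂, …, fₙ be hyperbolic Möbius transformations of the upper half-plane that all have the same attracting fixed point: α(f₁) = α(f₂) = ⋯ = α(fₙ). If τ(fᵢ) > log 5 for every i = 1, …, n, then there exist open intervals A and B in ℝ̄ with disjoint closures such that fᵢ maps the complement of B into A for every i = 1, …, n. -/
set_option synthInstance.maxHeartbeats 1000000
noncomputable section

open Filter Topology Set UpperHalfPlane
open scoped OnePoint MatrixGroups

namespace Paper

local notation "σ" => ((↑) : ℝ → OnePoint ℝ)

lemma det_pos (g : Mob) : 0 < ma g * md g - mb g * mc g := by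
  have h := g.property
  rw [Matrix.mem_glpos] at h
  rw [Matrix.GeneralLinearGroup.val_det_apply, Matrix.det_fin_two] at h
  exact h

lemma ma_mul (g h : Mob) : ma (g * h) = ma g * ma h + mb g * mc h := by
  show (((g * h : Mob) : GL (Fin 2) ℝ) : Matrix (Fin 2) (Fin 2) ℝ) 0 0 = _
  rw [Subgroup.coe_mul, Units.val_mul, Matrix.mul_apply, Fin.sum_univ_two]; rfl

lemma mb_mul (g h : Mob) : mb (g * h) = ma g * mb h + mb g * md h := by
  show (((g * h : Mob) : GL (Fin 2) ℝ) : Matrix (Fin 2) (Fin 2) ℝ) 0 1 = _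
  rw [Subgroup.coe_mul, Units.val_mul, Matrix.mul_apply, Fin.sum_univ_two]; rfl

lemma mc_mul (g h : Mob) : mc (g * h) = mc g * ma h + md g * mc h := by
  show (((g * h : Mob) : GL (Fin 2) ℝ) : Matrix (Fin 2) (Fin 2) ℝ) 1 0 = _
  rw [Subgroup.coe_mul, Units.val_mul, Matrix.mul_apply, Fin.sum_univ_two]; rfl

lemma md_mul (g h : Mob) : md (g * h) = mc g * mb h + md g * md h := by
  show (((g * h : Mob) : GL (Fin 2) ℝ) : Matrix (Fin 2) (Fin 2) ℝ) 1 1 = _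
  rw [Subgroup.coe_mul, Units.val_mul, Matrix.mul_apply, Fin.sum_univ_two]; rfl

lemma ma_one : ma (1 : Mob) = 1 := by
  show ((((1 : Mob) : GL (Fin 2) ℝ)) : Matrix (Fin 2) (Fin 2) ℝ) 0 0 = 1; simp
lemma mb_one : mb (1 : Mob) = 0 := by
  show ((((1 : Mob) : GL (Fin 2) ℝ)) : Matrix (Fin 2) (Fin 2) ℝ) 0 1 = 0; simp
lemma mc_one : mc (1 : Mob) = 0 := by
  show ((((1 : Mob) : GL (Fin 2) ℝ)) : Matrix (Fin 2) (Fin 2) ℝ) 1 0 = 0; simp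
lemma md_one : md (1 : Mob) = 1 := by
  show ((((1 : Mob) : GL (Fin 2) ℝ)) : Matrix (Fin 2) (Fin 2) ℝ) 1 1 = 1; simp

lemma bnd_coe (g : Mob) (y : ℝ) : bnd g (σ y) = if mc g * y + md g = 0 then ∞
      else σ ((ma g * y + mb g) / (mc g * y + md g)) := rfl

lemma bnd_infty (g : Mob) : bnd g ∞ = if mc g = 0 then ∞ else σ (ma g / mc g) := rfl

/-- numerator and denominator cannot vanish simultaneously -/
lemma num_ne_of_den_eq (g : Mob) {y : ℝ} (h : mc g * y + md g = 0) :
    ma g * y + mb g ≠ 0 := by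
  intro h2
  have hd := det_pos g
  have : ma g * md g - mb g * mc g
      = ma g * (mc g * y + md g) - mc g * (ma g * y + mb g) := by ring
  rw [h, h2] at this
  simp at this
  rw [this] at hd
  exact lt_irrefl 0 hd

lemma bnd_one (x : OnePoint ℝ) : bnd (1 : Mob) x = x := by
  cases x with
  | infty => rw [bnd_infty, mc_one]; simp
  | coe y =>
      rw [bnd_coe, mc_one, md_one, ma_one, mb_one]
      norm_num

lemma bnd_mul (g h : Mob) (x : OnePoint ℝ) : bnd (g * h) x = bnd g (bnd h x) := by
  have hdg := det_pos g
  have hdh := det_pos h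
  cases x with
  | infty =>
    rw [bnd_infty, bnd_infty, mc_mul, ma_mul]
    by_cases hc2 : mc h = 0
    · have ha2 : ma h ≠ 0 := by intro h0; rw [hc2, h0] at hdh; nlinarith
      rw [hc2, if_pos rfl, bnd_infty]
      by_cases hc1 : mc g = 0
      · simp [hc1]
      · have hne : mc g * ma h + md g * 0 ≠ 0 := by simpa using mul_ne_zero hc1 ha2
        rw [if_neg hne, if_neg hc1]
        congr 1
        field_simp
        try ring
    · rw [if_neg hc2, bnd_coe]
      have hkey : mc g * (ma h / mc h) + md g = (mc g * ma h + md g * mc h) / mc h := by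
        field_simp; try ring
      by_cases hcp : mc g * ma h + md g * mc h = 0
      · rw [if_pos hcp, if_pos (by rw [hkey, hcp, zero_div])]
      · rw [if_neg hcp, if_neg (by rw [hkey]; exact div_ne_zero hcp hc2)]
        congr 1
        rw [hkey]
        field_simp
        try ring
  | coe y =>
    rw [bnd_coe, bnd_coe, mc_mul, md_mul, ma_mul, mb_mul]
    set Dh := mc h * y + md h with hDh
    set Nh := ma h * y + mb h with hNh
    have hq1 : (mc g * ma h + md g * mc h) * y + (mc g * mb h + md g * md h)
        = mc g * Nh + md g * Dh := by rw [hDh, hNh]; ring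
    have hq2 : (ma g * ma h + mb g * mc h) * y + (ma g * mb h + mb g * md h)
        = ma g * Nh + mb g * Dh := by rw [hDh, hNh]; ring
    by_cases hD : Dh = 0
    · have hN : Nh ≠ 0 := num_ne_of_den_eq h hD
      rw [if_pos hD, bnd_infty]
      by_cases hc1 : mc g = 0
      · rw [if_pos hc1, if_pos (by rw [hq1, hD, hc1]; ring)]
      · rw [if_neg hc1, if_neg (by rw [hq1, hD]; simpa using mul_ne_zero hc1 hN)]
        congr 1
        rw [hq1, hq2, hD]
        field_simp
        try ring
    · rw [if_neg hD, bnd_coe]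
      have hkey : mc g * (Nh / Dh) + md g = (mc g * Nh + md g * Dh) / Dh := by
        field_simp
      by_cases hcp : mc g * Nh + md g * Dh = 0
      · rw [if_pos (by rw [hq1]; exact hcp), if_pos (by rw [hkey, hcp, zero_div])]
      · rw [if_neg (by rw [hq1]; exact hcp), if_neg (by rw [hkey]; exact div_ne_zero hcp hD)]
        congr 1
        rw [hq1, hq2, hkey]
        field_simp
        try ring

lemma bnd_left_inv (g : Mob) (x : OnePoint ℝ) : bnd g⁻¹ (bnd g x) = x := by
  rw [← bnd_mul, inv_mul_cancel, bnd_one]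

lemma bnd_right_inv (g : Mob) (x : OnePoint ℝ) : bnd g (bnd g⁻¹ x) = x := by
  rw [← bnd_mul, mul_inv_cancel, bnd_one]

lemma bnd_injective (g : Mob) : Function.Injective (bnd g) := by
  intro a b hab
  have := congrArg (bnd g⁻¹) hab
  rwa [bnd_left_inv, bnd_left_inv] at this

end Paper

namespace Paper

local notation "σ" => ((↑) : ℝ → OnePoint ℝ)

lemma tendsto_cocompact_of_abs {α : Type*} {l : Filter α} {f : α → ℝ}
    (h : Tendsto (fun y => |f y|) l atTop) : Tendsto f l (cocompact ℝ) := by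
  rw [hasBasis_cocompact.tendsto_right_iff]
  intro K hK
  obtain ⟨a, ha⟩ := hK.bddBelow
  obtain ⟨b, hb⟩ := hK.bddAbove
  filter_upwards [h.eventually_gt_atTop (max |a| |b|)] with y hy
  intro hyK
  have h1 := ha hyK
  have h2 := hb hyK
  have hle : |f y| ≤ max |a| |b| := by
    rcases abs_cases (f y) with ⟨he, _⟩ | ⟨he, _⟩ <;> rw [he]
    · exact le_trans h2 (le_trans (le_abs_self b) (le_max_right _ _))
    · exact le_trans (neg_le_neg h1) (le_trans (neg_le_abs a) (le_max_left _ _))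
  exact absurd hle (not_le.mpr hy)

lemma tendsto_affine_cocompact (a b : ℝ) (ha : a ≠ 0) :
    Tendsto (fun y : ℝ => a * y + b) (cocompact ℝ) (cocompact ℝ) := by
  have h1 : Tendsto (⇑(affineHomeomorph a b ha)) (cocompact ℝ) (cocompact ℝ) := by
    rw [Filter.Tendsto, (affineHomeomorph a b ha).map_cocompact]
  exact h1

lemma tendsto_abs_cocompact : Tendsto (fun y : ℝ => |y|) (cocompact ℝ) atTop := by
  rw [cocompact_eq_atBot_atTop, tendsto_sup]
  exact ⟨tendsto_abs_atBot_atTop, tendsto_abs_atTop_atTop⟩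

lemma tendsto_inv_cocompact : Tendsto (fun y : ℝ => y⁻¹) (cocompact ℝ) (𝓝 0) := by
  rw [tendsto_zero_iff_abs_tendsto_zero]
  have h2 := tendsto_abs_cocompact.inv_tendsto_atTop
  refine h2.congr fun y => ?_
  simp [abs_inv]

lemma continuous_bnd (g : Mob) : Continuous (bnd g) := by
  have hdg := det_pos g
  rw [continuous_iff_continuousAt]
  intro x
  cases x with
  | infty =>
    rw [OnePoint.continuousAt_infty', coclosedCompact_eq_cocompact]
    by_cases hc : mc g = 0
    · have hd : md g ≠ 0 := by intro h0; rw [hc, h0] at hdg; nlinarith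
      have ha : ma g ≠ 0 := by intro h0; rw [hc, h0] at hdg; nlinarith
      have hval : bnd g ∞ = ∞ := by rw [bnd_infty, if_pos hc]
      rw [Function.comp_def, hval]
      have heq : ∀ y : ℝ, bnd g (σ y) = σ ((ma g / md g) * y + mb g / md g) := by
        intro y
        rw [bnd_coe, hc, if_neg (by simpa using hd)]
        congr 1
        field_simp
        rw [mul_zero, zero_add, mul_div_assoc, div_self hd, mul_one]
      simp only [heq]
      refine OnePoint.tendsto_coe_infty.comp ?_
      rw [coclosedCompact_eq_cocompact]
      exact tendsto_affine_cocompact _ _ (div_ne_zero ha hd)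
    · have hval : bnd g ∞ = σ (ma g / mc g) := by rw [bnd_infty, if_neg hc]
      rw [Function.comp_def, hval]
      have hev : ∀ᶠ y : ℝ in cocompact ℝ, bnd g (σ y) =
          σ (ma g / mc g + ((mb g * mc g - ma g * md g) / mc g) * (mc g * y + md g)⁻¹) := by
        rw [Filter.eventually_iff, mem_cocompact]
        refine ⟨{-(md g / mc g)}, isCompact_singleton, ?_⟩
        intro y hy
        simp only [mem_compl_iff, mem_singleton_iff] at hy
        simp only [Set.mem_setOf_eq]
        have hden : mc g * y + md g ≠ 0 := by
          intro h0
          apply hy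
          field_simp
          linarith [h0]
        rw [bnd_coe, if_neg hden]
        congr 1
        field_simp
        linear_combination ma g * mul_inv_cancel₀ (show y * mc g + md g ≠ 0 by rw [mul_comm]; exact hden)
      rw [tendsto_congr' hev]
      have hlim : Tendsto (fun y : ℝ => ma g / mc g +
          ((mb g * mc g - ma g * md g) / mc g) * (mc g * y + md g)⁻¹) (cocompact ℝ)
          (𝓝 (ma g / mc g)) := by
        have h1 : Tendsto (fun y : ℝ => (mc g * y + md g)⁻¹) (cocompact ℝ) (𝓝 0) :=
          tendsto_inv_cocompact.comp (tendsto_affine_cocompact _ _ hc)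
        have := (tendsto_const_nhds (x := ma g / mc g) (f := cocompact ℝ)).add
          ((tendsto_const_nhds (x := (mb g * mc g - ma g * md g) / mc g)
            (f := cocompact ℝ)).mul h1)
        simpa using this
      exact (OnePoint.continuous_coe.tendsto _).comp hlim
  | coe x =>
    rw [OnePoint.continuousAt_coe]
    by_cases hD : mc g * x + md g = 0
    · have hc : mc g ≠ 0 := by
        intro h0
        have hd : md g = 0 := by rw [h0] at hD; linarith
        rw [h0, hd] at hdg; nlinarith
      have hval : (bnd g ∘ σ) x = ∞ := by
        simp only [Function.comp_apply, bnd_coe, if_pos hD]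
      rw [ContinuousAt, hval, ← nhdsNE_sup_pure x, tendsto_sup]
      constructor
      · have hden : ∀ y : ℝ, y ≠ x → mc g * y + md g ≠ 0 := by
          intro y hy h0
          apply hy
          have : mc g * (y - x) = 0 := by linarith [hD, h0]
          have := mul_eq_zero.mp this
          rcases this with h | h
          · exact absurd h hc
          · linarith
        have hev : ∀ᶠ y : ℝ in 𝓝[≠] x, (bnd g ∘ σ) y =
            σ ((ma g * y + mb g) / (mc g * y + md g)) := by
          filter_upwards [self_mem_nhdsWithin] with y hy
          simp only [Function.comp_apply, bnd_coe, if_neg (hden y hy)]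
        rw [tendsto_congr' hev]
        refine OnePoint.tendsto_coe_infty.comp ?_
        rw [coclosedCompact_eq_cocompact]
        apply tendsto_cocompact_of_abs
        have habs : ∀ y : ℝ, y ≠ x →
            |(ma g * y + mb g) / (mc g * y + md g)| = |ma g * y + mb g| * |mc g * y + md g|⁻¹ := by
          intro y hy
          rw [abs_div, div_eq_mul_inv]
        have hev2 : ∀ᶠ y : ℝ in 𝓝[≠] x,
            |ma g * y + mb g| * |mc g * y + md g|⁻¹
            = |(ma g * y + mb g) / (mc g * y + md g)| := by
          filter_upwards [self_mem_nhdsWithin] with y hy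
          exact (habs y hy).symm
        rw [← tendsto_congr' hev2]
        have hnum : Tendsto (fun y : ℝ => |ma g * y + mb g|) (𝓝[≠] x)
            (𝓝 |ma g * x + mb g|) := by
          apply Tendsto.mono_left _ nhdsWithin_le_nhds
          exact (continuous_abs.comp (by fun_prop)).tendsto x
        have hpos : 0 < |ma g * x + mb g| := abs_pos.mpr (num_ne_of_den_eq g hD)
        refine Tendsto.pos_mul_atTop hpos hnum ?_
        refine tendsto_inv_nhdsGT_zero.comp ?_
        rw [tendsto_nhdsWithin_iff]
        constructor
        · apply Tendsto.mono_left _ nhdsWithin_le_nhds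
          have : Tendsto (fun y : ℝ => |mc g * y + md g|) (𝓝 x) (𝓝 |mc g * x + md g|) :=
            (continuous_abs.comp (by fun_prop)).tendsto x
          rwa [hD, abs_zero] at this
        · filter_upwards [self_mem_nhdsWithin] with y hy
          exact mem_Ioi.mpr (abs_pos.mpr (hden y hy))
      · have : Tendsto (bnd g ∘ σ) (pure x) (pure ((bnd g ∘ σ) x)) := tendsto_pure_pure _ _
        rw [hval] at this
        exact this.mono_right (pure_le_nhds _)
    · have hev : ∀ᶠ y : ℝ in 𝓝 x, (bnd g ∘ σ) y =
          σ ((ma g * y + mb g) / (mc g * y + md g)) := by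
        have hopen : IsOpen {y : ℝ | mc g * y + md g ≠ 0} := by
          have : Continuous fun y : ℝ => mc g * y + md g := by fun_prop
          exact (isOpen_ne_fun this continuous_const)
        filter_upwards [hopen.mem_nhds hD] with y hy
        simp only [Function.comp_apply, bnd_coe, if_neg hy]
      have hcont : ContinuousAt (fun y : ℝ =>
          σ ((ma g * y + mb g) / (mc g * y + md g))) x := by
        apply (OnePoint.continuous_coe.tendsto _).comp
        exact ContinuousAt.div (by fun_prop) (by fun_prop) hD
      have hev' : (bnd g ∘ σ) =ᶠ[𝓝 x]
          fun y => σ ((ma g * y + mb g) / (mc g * y + md g)) := hev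
      exact hcont.congr hev'.symm
end Paper

namespace Paper

local notation "σ" => ((↑) : ℝ → OnePoint ℝ)

def lam (g : Mob) : ℝ := ma g / md g
def cc (g : Mob) : ℝ := mb g / md g

lemma md_ne_zero (g : Mob) (hc : mc g = 0) : md g ≠ 0 := by
  intro h0
  have := det_pos g
  rw [hc, h0] at this
  nlinarith

lemma lam_pos (g : Mob) (hc : mc g = 0) : 0 < lam g := by
  have hd := det_pos g
  rw [hc] at hd
  have : 0 < ma g * md g := by nlinarith
  exact div_pos_iff.mpr (by rcases mul_pos_iff.mp this with ⟨h1, h2⟩ | ⟨h1, h2⟩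
                            · exact Or.inl ⟨h1, h2⟩
                            · exact Or.inr ⟨h1, h2⟩)

lemma bnd_coe_affine (g : Mob) (hc : mc g = 0) (y : ℝ) :
    bnd g (σ y) = σ (lam g * y + cc g) := by
  have hd := md_ne_zero g hc
  rw [bnd_coe, hc, if_neg (by simpa using hd)]
  congr 1
  rw [lam, cc]
  field_simp
  rw [mul_zero, zero_add, mul_div_assoc, div_self hd, mul_one]

lemma bnd_infty_affine (g : Mob) (hc : mc g = 0) : bnd g ∞ = ∞ := by
  rw [bnd_infty, if_pos hc]

lemma iterate_coe (g : Mob) (hc : mc g = 0) (n : ℕ) (y : ℝ) :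
    (bnd g)^[n] (σ y) = σ ((fun t => lam g * t + cc g)^[n] y) := by
  induction n generalizing y with
  | zero => rfl
  | succ n ih =>
      rw [Function.iterate_succ_apply, Function.iterate_succ_apply, bnd_coe_affine g hc, ih]

lemma affine_iter (l c w : ℝ) (hw : l * w + c = w) (n : ℕ) (y : ℝ) :
    (fun t => l * t + c)^[n] y = l ^ n * (y - w) + w := by
  induction n with
  | zero => simp
  | succ n ih =>
      rw [Function.iterate_succ_apply', ih]
      show l * (l ^ n * (y - w) + w) + c = l ^ (n + 1) * (y - w) + w
      rw [pow_succ]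
      nlinarith [hw]

lemma fixw (l c : ℝ) (h : l ≠ 1) : l * (c / (1 - l)) + c = c / (1 - l) := by
  have h1 : (1 : ℝ) - l ≠ 0 := sub_ne_zero.mpr (Ne.symm h)
  field_simp
  ring

lemma mem_fixedPoints_iff (g : Mob) (x : OnePoint ℝ) :
    x ∈ FixedPoints g ↔ bnd g x = x := Iff.rfl

lemma hyperbolic_lam_ne_one (g : Mob) (hg : IsHyperbolic g) (hc : mc g = 0) : lam g ≠ 1 := by
  intro hl
  obtain ⟨p, q, hpq, hfix⟩ := hg
  by_cases hcc : cc g = 0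
  · have hall : ∀ x : OnePoint ℝ, x ∈ FixedPoints g := by
      intro x
      cases x with
      | infty => exact bnd_infty_affine g hc
      | coe y => rw [mem_fixedPoints_iff, bnd_coe_affine g hc, hl, hcc]; norm_num
    have h0 : (σ 0) ∈ ({p, q} : Set (OnePoint ℝ)) := hfix ▸ hall _
    have h1 : (σ 1) ∈ ({p, q} : Set (OnePoint ℝ)) := hfix ▸ hall _
    have h2 : (σ 2) ∈ ({p, q} : Set (OnePoint ℝ)) := hfix ▸ hall _
    simp only [mem_insert_iff, mem_singleton_iff] at h0 h1 h2
    rcases h0 with h0 | h0 <;> rcases h1 with h1 | h1 <;> rcases h2 with h2 | h2 <;>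
      [skip; skip; skip; skip; skip; skip; skip; skip] <;>
      first
        | (exact absurd (h0 ▸ h1 ▸ rfl : (σ 0) = (σ 1)) (by
            intro hh; rw [OnePoint.coe_eq_coe] at hh; norm_num at hh))
        | (exact absurd (h1 ▸ h2 ▸ rfl : (σ 1) = (σ 2)) (by
            intro hh; rw [OnePoint.coe_eq_coe] at hh; norm_num at hh))
        | (exact absurd (h0 ▸ h2 ▸ rfl : (σ 0) = (σ 2)) (by
            intro hh; rw [OnePoint.coe_eq_coe] at hh; norm_num at hh))
  · have hnofix : ∀ x : OnePoint ℝ, x ∈ FixedPoints g → x = ∞ := by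
      intro x hx
      cases x with
      | infty => rfl
      | coe y =>
          rw [mem_fixedPoints_iff, bnd_coe_affine g hc, hl, one_mul, OnePoint.coe_eq_coe] at hx
          exact absurd (by linarith : cc g = 0) hcc
    have hp : p = ∞ := hnofix p (hfix ▸ mem_insert p {q})
    have hq : q = ∞ := hnofix q (hfix ▸ mem_insert_of_mem p rfl)
    exact hpq (hp.trans hq.symm)

lemma attract_of_lam_gt (g : Mob) (hc : mc g = 0) (hl : 1 < lam g) :
    IsAttractingFixedPoint g ∞ := by
  refine ⟨bnd_infty_affine g hc, ?_⟩
  intro x hx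
  set w : ℝ := cc g / (1 - lam g) with hw
  have hfixw : lam g * w + cc g = w := fixw _ _ (ne_of_gt hl)
  cases x with
  | infty => exact absurd (bnd_infty_affine g hc) hx
  | coe y =>
      have hyw : y ≠ w := by
        intro h
        apply hx
        rw [mem_fixedPoints_iff, bnd_coe_affine g hc, h, hfixw]
      have heq : ∀ n, (bnd g)^[n] (σ y) = σ (lam g ^ n * (y - w) + w) := by
        intro n
        rw [iterate_coe g hc, affine_iter _ _ _ hfixw]
      simp only [heq]
      refine OnePoint.tendsto_coe_infty.comp ?_
      rw [coclosedCompact_eq_cocompact]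
      apply tendsto_cocompact_of_abs
      have hbound : ∀ n : ℕ, lam g ^ n * |y - w| - |w| ≤ |lam g ^ n * (y - w) + w| := by
        intro n
        have h1 : |lam g ^ n * (y - w)| - |w| ≤ |lam g ^ n * (y - w) + w| := by
          have := abs_add_le (lam g ^ n * (y - w) + w) (-w)
          simp only [add_neg_cancel_right, abs_neg] at this
          linarith
        rw [abs_mul, abs_of_pos (pow_pos (by linarith) n)] at h1
        exact h1
      refine tendsto_atTop_mono hbound ?_
      have h2 : Tendsto (fun n : ℕ => lam g ^ n * |y - w|) atTop atTop :=
        (tendsto_pow_atTop_atTop_of_one_lt hl).atTop_mul_const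
          (abs_pos.mpr (sub_ne_zero.mpr hyw))
      exact tendsto_atTop_add_const_right _ _ h2

lemma attract_of_lam_lt (g : Mob) (hc : mc g = 0) (hl0 : 0 < lam g) (hl : lam g < 1) :
    IsAttractingFixedPoint g (σ (cc g / (1 - lam g))) := by
  set w : ℝ := cc g / (1 - lam g) with hw
  have hfixw : lam g * w + cc g = w := fixw _ _ (ne_of_lt hl)
  refine ⟨by rw [bnd_coe_affine g hc, hfixw], ?_⟩
  intro x hx
  cases x with
  | infty => exact absurd (bnd_infty_affine g hc) hx
  | coe y =>
      have heq : ∀ n, (bnd g)^[n] (σ y) = σ (lam g ^ n * (y - w) + w) := by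
        intro n
        rw [iterate_coe g hc, affine_iter _ _ _ hfixw]
      simp only [heq]
      refine (OnePoint.continuous_coe.tendsto w).comp ?_
      have h1 : Tendsto (fun n : ℕ => lam g ^ n * (y - w) + w) atTop (𝓝 (0 * (y - w) + w)) :=
        (((tendsto_pow_atTop_nhds_zero_of_lt_one hl0.le hl)).mul_const _).add_const _
      simpa using h1

lemma lam_gt_of_attract_infty (g : Mob) (hg : IsHyperbolic g) (hc : mc g = 0)
    (ha : IsAttractingFixedPoint g ∞) : 1 < lam g := by
  have hne := hyperbolic_lam_ne_one g hg hc
  have hpos := lam_pos g hc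
  rcases lt_or_gt_of_ne hne with hl | hl
  · exfalso
    set w : ℝ := cc g / (1 - lam g) with hw
    have hfixw : lam g * w + cc g = w := fixw _ _ (ne_of_lt hl)
    have hz : σ (w + 1) ∉ FixedPoints g := by
      rw [mem_fixedPoints_iff, bnd_coe_affine g hc]
      intro h
      rw [OnePoint.coe_eq_coe] at h
      have : lam g = 1 := by nlinarith [hfixw]
      exact hne this
    have h1 := ha.2 _ hz
    have heq : ∀ n, (bnd g)^[n] (σ (w + 1)) = σ (lam g ^ n * 1 + w) := by
      intro n
      rw [iterate_coe g hc, affine_iter _ _ _ hfixw]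
      norm_num
    rw [tendsto_congr heq] at h1
    have h2 : Tendsto (fun n : ℕ => σ (lam g ^ n * 1 + w)) atTop (𝓝 (σ w)) := by
      refine (OnePoint.continuous_coe.tendsto w).comp ?_
      have := ((tendsto_pow_atTop_nhds_zero_of_lt_one hpos.le hl).mul_const (1:ℝ)).add_const w
      simpa using this
    exact OnePoint.coe_ne_infty w (tendsto_nhds_unique h2 h1)
  · exact hl

lemma iterate_conj (k g : Mob) (n : ℕ) (x : OnePoint ℝ) :
    (bnd (k * g * k⁻¹))^[n] x = bnd k ((bnd g)^[n] (bnd k⁻¹ x)) := by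
  induction n with
  | zero => simp [bnd_right_inv]
  | succ n ih =>
      rw [Function.iterate_succ_apply', ih, Function.iterate_succ_apply',
        bnd_mul, bnd_mul, bnd_left_inv]

lemma fixed_conj (k g : Mob) : FixedPoints (k * g * k⁻¹) = bnd k '' FixedPoints g := by
  ext x
  simp only [FixedPoints, mem_setOf_eq, mem_image]
  constructor
  · intro hx
    refine ⟨bnd k⁻¹ x, ?_, bnd_right_inv k x⟩
    rw [bnd_mul, bnd_mul] at hx
    have h2 := congrArg (bnd k⁻¹) hx
    rwa [bnd_left_inv] at h2
  · rintro ⟨y, hy, rfl⟩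
    rw [bnd_mul, bnd_mul, bnd_left_inv, hy]

lemma hyperbolic_conj (k g : Mob) (hg : IsHyperbolic g) : IsHyperbolic (k * g * k⁻¹) := by
  obtain ⟨p, q, hpq, hfix⟩ := hg
  refine ⟨bnd k p, bnd k q, fun h => hpq (bnd_injective k h), ?_⟩
  rw [fixed_conj, hfix, Set.image_insert_eq, Set.image_singleton]

lemma attract_conj (k g : Mob) (p : OnePoint ℝ) (hp : IsAttractingFixedPoint g p) :
    IsAttractingFixedPoint (k * g * k⁻¹) (bnd k p) := by
  constructor
  · rw [bnd_mul, bnd_mul, bnd_left_inv, hp.1]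
  · intro x hx
    have hx' : bnd k⁻¹ x ∉ FixedPoints g := by
      intro h
      exact hx (by rw [fixed_conj]; exact ⟨bnd k⁻¹ x, h, bnd_right_inv k x⟩)
    have h3 := ((continuous_bnd k).tendsto p).comp (hp.2 (bnd k⁻¹ x) hx')
    exact h3.congr fun n => (iterate_conj k g n x).symm

/-- The conjugator sending a real point `r` to `∞`. -/
def rot (r : ℝ) : Mob :=
  Matrix.SpecialLinearGroup.toGLPos
    (⟨!![0, -1; 1, -r], by simp [Matrix.det_fin_two_of]⟩ :
      Matrix.SpecialLinearGroup (Fin 2) ℝ)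

lemma ma_rot (r : ℝ) : ma (rot r) = 0 := by
  rfl
lemma mb_rot (r : ℝ) : mb (rot r) = -1 := by
  rfl
lemma mc_rot (r : ℝ) : mc (rot r) = 1 := by
  rfl
lemma md_rot (r : ℝ) : md (rot r) = -r := by
  rfl

lemma bnd_rot_r (r : ℝ) : bnd (rot r) (σ r) = ∞ := by
  rw [bnd_coe, if_pos (by rw [mc_rot, md_rot]; ring)]

lemma bnd_rot_inv_infty (r : ℝ) : bnd (rot r)⁻¹ ∞ = σ r := by
  have := congrArg (bnd (rot r)⁻¹) (bnd_rot_r r)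
  rw [bnd_left_inv] at this
  exact this.symm

lemma mc_eq_zero_of_fix_infty (g : Mob) (h : bnd g ∞ = ∞) : mc g = 0 := by
  by_contra hc
  rw [bnd_infty, if_neg hc] at h
  exact OnePoint.coe_ne_infty _ h

lemma exists_attract (g : Mob) (hg : IsHyperbolic g) : ∃ p, IsAttractingFixedPoint g p := by
  by_cases hc : mc g = 0
  · have hne := hyperbolic_lam_ne_one g hg hc
    have hpos := lam_pos g hc
    rcases lt_or_gt_of_ne hne with hl | hl
    · exact ⟨_, attract_of_lam_lt g hc hpos hl⟩
    · exact ⟨_, attract_of_lam_gt g hc hl⟩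
  · obtain ⟨p, q, hpq, hfix⟩ := hg
    have hp : p ∈ FixedPoints g := hfix ▸ mem_insert p {q}
    rw [mem_fixedPoints_iff] at hp
    have hpne : p ≠ ∞ := by
      intro h
      rw [h, bnd_infty, if_neg hc] at hp
      exact OnePoint.coe_ne_infty _ hp
    obtain ⟨r, hr⟩ : ∃ r : ℝ, p = σ r := by
      cases p with
      | infty => exact absurd rfl hpne
      | coe y => exact ⟨y, rfl⟩
    rw [hr] at hp
    set k := rot r with hk
    set g' := k * g * k⁻¹ with hg'
    have hhyp' : IsHyperbolic g' := hyperbolic_conj k g ⟨p, q, hpq, hfix⟩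
    have hfix' : bnd g' ∞ = ∞ := by
      rw [hg', bnd_mul, bnd_mul, bnd_rot_inv_infty, hp, bnd_rot_r]
    have hc' : mc g' = 0 := mc_eq_zero_of_fix_infty g' hfix'
    have hex : ∃ p', IsAttractingFixedPoint g' p' := by
      have hne := hyperbolic_lam_ne_one g' hhyp' hc'
      have hpos := lam_pos g' hc'
      rcases lt_or_gt_of_ne hne with hl | hl
      · exact ⟨_, attract_of_lam_lt g' hc' hpos hl⟩
      · exact ⟨_, attract_of_lam_gt g' hc' hl⟩
    obtain ⟨p', hp'⟩ := hex
    refine ⟨bnd k⁻¹ p', ?_⟩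
    have := attract_conj k⁻¹ g' p' hp'
    have hgid : k⁻¹ * g' * k⁻¹⁻¹ = g := by
      rw [hg']
      group
    rwa [hgid] at this

end Paper

namespace Paper

local notation "σ" => ((↑) : ℝ → OnePoint ℝ)

lemma isOpenArc_Ioo (a b : ℝ) (hab : a < b) : IsOpenArc (σ '' Ioo a b) := by
  refine ⟨OnePoint.isOpenEmbedding_coe.isOpenMap _ isOpen_Ioo, ?_, ?_⟩
  · exact (isConnected_Ioo (by exact hab)).image _ OnePoint.continuous_coe.continuousOn
  · intro h
    have h2 : (∞ : OnePoint ℝ) ∈ σ '' Ioo a b := h ▸ mem_univ _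
    obtain ⟨y, _, hy⟩ := h2
    exact OnePoint.coe_ne_infty y hy

lemma infty_mem_closure_image (s : Set ℝ) (hs : ¬ Bornology.IsBounded s) :
    (∞ : OnePoint ℝ) ∈ closure (σ '' s) := by
  rw [mem_closure_iff_nhds_basis OnePoint.hasBasis_nhds_infty]
  rintro K ⟨_, hKcpt⟩
  have hKb := hKcpt.isBounded
  have hns : ¬ s ⊆ K := fun hsub => hs (hKb.subset hsub)
  obtain ⟨y, hys, hyK⟩ := not_subset.mp hns
  exact ⟨σ y, mem_image_of_mem _ hys, Or.inl (mem_image_of_mem _ hyK)⟩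

lemma not_bounded_Ioi (b : ℝ) : ¬ Bornology.IsBounded (Ioi b) := by
  intro h
  obtain ⟨R, hR⟩ := h.subset_closedBall 0
  have h1 : max b R + 1 ∈ Ioi b := by
    simp only [mem_Ioi]
    have := le_max_left b R
    linarith
  have h2 := hR h1
  simp only [Metric.mem_closedBall, Real.dist_eq, sub_zero] at h2
  have h3 := le_max_right b R
  have h4 := le_abs_self (max b R + 1)
  linarith

lemma not_bounded_Iio (a : ℝ) : ¬ Bornology.IsBounded (Iio a) := by
  intro h
  obtain ⟨R, hR⟩ := h.subset_closedBall 0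
  have h1 : min a (-R) - 1 ∈ Iio a := by
    simp only [mem_Iio]
    have := min_le_left a (-R)
    linarith
  have h2 := hR h1
  simp only [Metric.mem_closedBall, Real.dist_eq, sub_zero] at h2
  have h3 := min_le_right a (-R)
  have h4 := neg_le_abs (min a (-R) - 1)
  linarith

lemma isOpenArc_compl_Icc (a b : ℝ) (hab : a ≤ b) : IsOpenArc ((σ '' Icc a b)ᶜ) := by
  have hcpt : IsCompact (σ '' Icc a b) := isCompact_Icc.image OnePoint.continuous_coe
  have hopen : IsOpen ((σ '' Icc a b)ᶜ) := hcpt.isClosed.isOpen_compl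
  have hset : (σ '' Icc a b)ᶜ = insert ∞ (σ '' Iio a) ∪ insert ∞ (σ '' Ioi b) := by
    ext x
    cases x with
    | infty =>
        simp only [mem_compl_iff, mem_union, mem_insert_iff, mem_image]
        constructor
        · intro _
          exact Or.inl (Or.inl trivial)
        · intro _ h
          obtain ⟨y, -, hy⟩ := h
          exact OnePoint.coe_ne_infty y hy
    | coe y =>
        have h1 : σ y ∈ σ '' Icc a b ↔ y ∈ Icc a b := OnePoint.coe_injective.mem_set_image
        have h2 : σ y ∈ σ '' Iio a ↔ y ∈ Iio a := OnePoint.coe_injective.mem_set_image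
        have h3 : σ y ∈ σ '' Ioi b ↔ y ∈ Ioi b := OnePoint.coe_injective.mem_set_image
        have h4 := OnePoint.coe_ne_infty y
        simp only [mem_compl_iff, mem_union, mem_insert_iff, h1, h2, h3, h4, false_or,
          mem_Icc, mem_Iio, mem_Ioi]
        rw [not_and_or, not_le, not_le]
  have hS1 : IsConnected (insert ∞ (σ '' Iio a)) := by
    have hconn : IsConnected (σ '' Iio a) :=
      isConnected_Iio.image _ OnePoint.continuous_coe.continuousOn
    have hsub : insert ∞ (σ '' Iio a) ⊆ closure (σ '' Iio a) := by
      intro x hx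
      rcases mem_insert_iff.mp hx with rfl | hx
      · exact infty_mem_closure_image _ (not_bounded_Iio a)
      · exact subset_closure hx
    exact ⟨⟨∞, mem_insert _ _⟩,
      hconn.isPreconnected.subset_closure (subset_insert _ _) hsub⟩
  have hS2 : IsConnected (insert ∞ (σ '' Ioi b)) := by
    have hconn : IsConnected (σ '' Ioi b) :=
      isConnected_Ioi.image _ OnePoint.continuous_coe.continuousOn
    have hsub : insert ∞ (σ '' Ioi b) ⊆ closure (σ '' Ioi b) := by
      intro x hx
      rcases mem_insert_iff.mp hx with rfl | hx
      · exact infty_mem_closure_image _ (not_bounded_Ioi b)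
      · exact subset_closure hx
    exact ⟨⟨∞, mem_insert _ _⟩,
      hconn.isPreconnected.subset_closure (subset_insert _ _) hsub⟩
  refine ⟨hopen, ?_, ?_⟩
  · rw [hset]
    exact hS1.union ⟨∞, mem_insert _ _, mem_insert _ _⟩ hS2
  · intro h
    have h2 : σ a ∈ (σ '' Icc a b)ᶜ := h ▸ mem_univ _
    exact h2 (mem_image_of_mem _ (left_mem_Icc.mpr hab))

lemma closure_Ioo_subset (a b : ℝ) : closure (σ '' Ioo a b) ⊆ σ '' Icc a b :=
  closure_minimal (image_mono Ioo_subset_Icc_self)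
    (isCompact_Icc.image OnePoint.continuous_coe).isClosed

lemma closure_compl_Icc_subset (a b : ℝ) :
    closure ((σ '' Icc a b)ᶜ) ⊆ (σ '' Ioo a b)ᶜ :=
  closure_minimal (compl_subset_compl.mpr (image_mono Ioo_subset_Icc_self))
    (isClosed_compl_iff.mpr (OnePoint.isOpenEmbedding_coe.isOpenMap _ isOpen_Ioo))

lemma main_affine (n : ℕ) (g : Fin n → Mob) (h0 : ∀ i, mc (g i) = 0)
    (h1 : ∀ i, 1 < lam (g i)) :
    ∃ A B : Set (OnePoint ℝ), IsOpenArc A ∧ IsOpenArc B ∧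
      Disjoint (closure A) (closure B) ∧ ∀ i, bnd (g i) '' Bᶜ ⊆ A := by
  classical
  set N : ℝ := 1 + ∑ i, (|cc (g i)| + 2) / (lam (g i) - 1) with hN
  have hterm : ∀ i, 0 ≤ (|cc (g i)| + 2) / (lam (g i) - 1) := fun i =>
    div_nonneg (by positivity) (by linarith [h1 i])
  have hN1 : 1 ≤ N := by
    rw [hN]
    nlinarith [Finset.sum_nonneg (fun i (_ : i ∈ Finset.univ) => hterm i)]
  have hterm_le : ∀ i, (|cc (g i)| + 2) / (lam (g i) - 1) ≤ N - 1 := by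
    intro i
    have := Finset.single_le_sum (f := fun i => (|cc (g i)| + 2) / (lam (g i) - 1))
      (fun j _ => hterm j) (Finset.mem_univ i)
    rw [hN]
    linarith
  have hkey : ∀ i, N + 2 ≤ lam (g i) * N - |cc (g i)| := by
    intro i
    have hl := h1 i
    have h2 : |cc (g i)| + 2 ≤ (N - 1) * (lam (g i) - 1) := by
      have h3 := hterm_le i
      rwa [div_le_iff₀ (by linarith)] at h3
    nlinarith
  set M : ℝ := N + 1 with hM
  refine ⟨(σ '' Icc (-M) M)ᶜ, σ '' Ioo (-N) N,
    isOpenArc_compl_Icc _ _ (by linarith), isOpenArc_Ioo _ _ (by linarith), ?_, ?_⟩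
  · have hclA := closure_compl_Icc_subset (-M) M
    have hclB : closure (σ '' Ioo (-N) N) ⊆ σ '' Ioo (-M) M := by
      refine (closure_Ioo_subset _ _).trans (image_mono ?_)
      intro y hy
      simp only [mem_Icc] at hy
      simp only [mem_Ioo]
      constructor <;> [linarith; linarith]
    exact Disjoint.mono hclA hclB disjoint_compl_left
  · intro i x hx
    obtain ⟨z, hz, rfl⟩ := hx
    cases z with
    | infty =>
        rw [bnd_infty_affine _ (h0 i)]
        intro h
        obtain ⟨y, -, hy⟩ := h
        exact OnePoint.coe_ne_infty y hy
    | coe y =>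
        have hy : y ∉ Ioo (-N) N := by
          intro h
          exact hz (mem_image_of_mem _ h)
        simp only [mem_Ioo, not_and_or, not_lt] at hy
        rw [bnd_coe_affine _ (h0 i)]
        intro h
        obtain ⟨u, hu, huy⟩ := h
        rw [OnePoint.coe_eq_coe] at huy
        simp only [mem_Icc] at hu
        rw [huy] at hu
        have hl := h1 i
        have hki := hkey i
        have hc1 := le_abs_self (cc (g i))
        have hc2 := neg_abs_le (cc (g i))
        rcases hy with hy | hy
        · -- y ≤ -N
          have : lam (g i) * y ≤ lam (g i) * (-N) := by nlinarith
          have hub := hu.1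
          nlinarith
        · -- N ≤ y
          have : lam (g i) * N ≤ lam (g i) * y := by nlinarith
          have hub := hu.2
          nlinarith

end Paper

namespace Paper

local notation "σ" => ((↑) : ℝ → OnePoint ℝ)

def bndHomeo (g : Mob) : Homeomorph (OnePoint ℝ) (OnePoint ℝ) where
  toFun := bnd g
  invFun := bnd g⁻¹
  left_inv := bnd_left_inv g
  right_inv := bnd_right_inv g
  continuous_toFun := continuous_bnd g
  continuous_invFun := continuous_bnd g⁻¹

lemma closure_preimage_bnd (g : Mob) (s : Set (OnePoint ℝ)) :
    closure (bnd g ⁻¹' s) = bnd g ⁻¹' closure s :=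
  ((bndHomeo g).preimage_closure s).symm

lemma isOpenArc_preimage (g : Mob) (A : Set (OnePoint ℝ)) (hA : IsOpenArc A) :
    IsOpenArc (bnd g ⁻¹' A) := by
  obtain ⟨hopen, hconn, hne⟩ := hA
  refine ⟨hopen.preimage (continuous_bnd g), ?_, ?_⟩
  · have himg : bnd g ⁻¹' A = bnd g⁻¹ '' A := by
      ext x
      constructor
      · intro hx
        exact ⟨bnd g x, hx, bnd_left_inv g x⟩
      · rintro ⟨y, hy, rfl⟩
        rw [mem_preimage, bnd_right_inv]
        exact hy
    rw [himg]
    exact hconn.image _ (continuous_bnd g⁻¹).continuousOn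
  · intro h
    apply hne
    rw [eq_univ_iff_forall]
    intro x
    have h2 : bnd g⁻¹ x ∈ bnd g ⁻¹' A := h ▸ mem_univ _
    rwa [mem_preimage, bnd_right_inv] at h2

end Paper

open Paper in
theorem statement12' (n : ℕ) (f : Fin n → Mob) (hhyp : ∀ i, IsHyperbolic (f i))
    (hsame : ∀ i j, att (f i) = att (f j))
    (htau : ∀ i, Real.log 5 < transLength (f i)) :
    ∃ A B : Set (OnePoint ℝ), IsOpenArc A ∧ IsOpenArc B ∧
      Disjoint (closure A) (closure B) ∧
      ∀ i, Paper.bnd (f i) '' Bᶜ ⊆ A := by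
  have hatt : ∀ i, IsAttractingFixedPoint (f i) (att (f i)) := fun i =>
    Classical.epsilon_spec (exists_attract (f i) (hhyp i))
  rcases n with _ | m
  · obtain ⟨A, B, hA, hB, hd, -⟩ :=
      main_affine 0 f (fun i => i.elim0) (fun i => i.elim0)
    exact ⟨A, B, hA, hB, hd, fun i => i.elim0⟩
  · have hsame0 : ∀ i, att (f i) = att (f 0) := fun i => hsame i 0
    cases hα : att (f 0) with
    | infty =>
        have hattinf : ∀ i, IsAttractingFixedPoint (f i) ∞ := by
          intro i
          have h := hatt i
          rwa [hsame0 i, hα] at h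
        have h0 : ∀ i, mc (f i) = 0 := fun i => mc_eq_zero_of_fix_infty _ (hattinf i).1
        have h1 : ∀ i, 1 < lam (f i) := fun i =>
          lam_gt_of_attract_infty _ (hhyp i) (h0 i) (hattinf i)
        exact main_affine _ f h0 h1
    | coe r =>
        set k := rot r with hk
        have hattr : ∀ i, IsAttractingFixedPoint (f i) ((r : ℝ) : OnePoint ℝ) := by
          intro i
          have h := hatt i
          rwa [hsame0 i, hα] at h
        have hatt' : ∀ i, IsAttractingFixedPoint (k * f i * k⁻¹) ∞ := by
          intro i
          have h := attract_conj k (f i) _ (hattr i)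
          rwa [hk, bnd_rot_r] at h
        have hhyp' : ∀ i, IsHyperbolic (k * f i * k⁻¹) := fun i =>
          hyperbolic_conj k (f i) (hhyp i)
        have h0 : ∀ i, mc (k * f i * k⁻¹) = 0 := fun i =>
          mc_eq_zero_of_fix_infty _ (hatt' i).1
        have h1 : ∀ i, 1 < lam (k * f i * k⁻¹) := fun i =>
          lam_gt_of_attract_infty _ (hhyp' i) (h0 i) (hatt' i)
        obtain ⟨A', B', hA', hB', hd', himg'⟩ :=
          main_affine _ (fun i => k * f i * k⁻¹) h0 h1
        refine ⟨bnd k ⁻¹' A', bnd k ⁻¹' B', isOpenArc_preimage k A' hA',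
          isOpenArc_preimage k B' hB', ?_, ?_⟩
        · rw [closure_preimage_bnd, closure_preimage_bnd]
          exact hd'.preimage _
        · intro i
          rintro x ⟨z, hz, rfl⟩
          have hzB : bnd k z ∈ B'ᶜ := fun h => hz (mem_preimage.mpr h)
          have h2 : bnd (k * f i * k⁻¹) (bnd k z) ∈ A' :=
            himg' i ⟨bnd k z, hzB, rfl⟩
          rw [bnd_mul, bnd_mul, bnd_left_inv] at h2
          exact mem_preimage.mpr h2


open Paper in
/-- Lemma 2.8: if `f₁, …, fₙ` are hyperbolic transformations sharing
the same attracting fixed point and `τ(fᵢ) > log 5` for each `i`, then there are open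
intervals `A, B` of ℝ̄ with disjoint closures such that every `fᵢ` maps the complement of
`B` into `A`. -/
theorem statement12 (n : ℕ) (f : Fin n → Mob) (hhyp : ∀ i, IsHyperbolic (f i))
    (hsame : ∀ i j, att (f i) = att (f j))
    (htau : ∀ i, Real.log 5 < transLength (f i)) :
    ∃ A B : Set (OnePoint ℝ), IsOpenArc A ∧ IsOpenArc B ∧
      Disjoint (closure A) (closure B) ∧
      ∀ i, Paper.bnd (f i) '' Bᶜ ⊆ A := by
  exact statement12' n f hhyp hsame htau
end
end
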